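/- For natural numbers k and n, let e_k(n) denote the number of walks of length n on {0,1,…,k} starting and ending at 0 with steps +1 or −1, and let E_k ∈ ℚ⟦t⟧ be the formal power series whose n-th coefficient is e_k(n). Then E₀ = 1, and for every k ≥ 1 one has E_k·(1 − t²·E_{k−1}) = 1 in ℚ⟦t⟧. -/

import Mathlib

/-- The number of walks of length `n` on `{0, 1, …, k}` starting and ending at `0`,
with steps `+1` or `-1`. -/
noncomputable def boundedExcursionCount (k n : ℕ) : ℕ :=
  Nat.card {w : Fin (n + 1) → ℕ //
    w 0 = 0 ∧ w (Fin.last n) = 0 ∧ (∀ j : Fin (n + 1), w j ≤ k) ∧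
    ∀ j : Fin n, ((w j.succ : ℤ) - (w j.castSucc : ℤ)).natAbs = 1}

/-- The generating function of excursions on `{0, …, k}`. -/
noncomputable def boundedExcursionSeries (k : ℕ) : PowerSeries ℚ :=
  PowerSeries.mk fun n => (boundedExcursionCount k n : ℚ)

/-- Step relation: adjacent heights differ by exactly one. -/
def BEStep (a b : ℕ) : Prop := ((b : ℤ) - (a : ℤ)).natAbs = 1

/-- Inductive type of excursions bounded by `k`. -/
inductive BE : ℕ → Type where
  | nil : ∀ {k}, BE k
  | node : ∀ {k}, BE k → BE (k + 1) → BE (k + 1)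

namespace BE

def size : ∀ {k}, BE k → ℕ
  | _, .nil => 0
  | _, .node a b => a.size + b.size + 2

def toList : ∀ {k}, ℕ → BE k → List ℕ
  | _, h, .nil => [h]
  | _, h, .node a b => h :: (a.toList (h + 1) ++ b.toList h)

theorem toList_ne_nil {k} (h : ℕ) (e : BE k) : e.toList h ≠ [] := by
  cases e <;> simp [toList]

theorem length_toList {k} (e : BE k) : ∀ h, (e.toList h).length = e.size + 1 := by
  induction e with
  | nil => intro h; simp [toList, size]
  | node a b iha ihb =>
      intro h
      simp only [toList, size, List.length_cons, List.length_append, iha, ihb]; omega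

theorem head?_toList {k} (h : ℕ) (e : BE k) : (e.toList h).head? = some h := by
  cases e <;> simp [toList]

theorem getLast?_toList {k} (e : BE k) : ∀ h, (e.toList h).getLast? = some h := by
  induction e with
  | nil => intro h; simp [toList]
  | node a b iha ihb =>
      intro h
      simp only [toList]
      rw [List.getLast?_cons, List.getLast?_append, ihb]
      simp

theorem mem_toList_bounds {k} (e : BE k) :
    ∀ h, ∀ x ∈ e.toList h, h ≤ x ∧ x ≤ h + k := by
  induction e with
  | nil => intro h; simp [toList]
  | node a b iha ihb =>
      intro h x hx
      simp only [toList, List.mem_cons, List.mem_append] at hx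
      rcases hx with rfl | hx | hx
      · omega
      · have := iha (h + 1) x hx; omega
      · have := ihb h x hx; omega

theorem chain'_toList {k} (e : BE k) : ∀ h, (e.toList h).Chain' BEStep := by
  induction e with
  | nil => intro h; simp [toList]; exact List.isChain_singleton _
  | node a b iha ihb =>
      intro h
      simp only [toList]
      rw [show h :: (a.toList (h + 1) ++ b.toList h)
            = (h :: a.toList (h + 1)) ++ b.toList h by simp]
      change List.IsChain _ _
      rw [List.isChain_append]
      refine ⟨?_, ihb h, ?_⟩
      · rw [List.isChain_cons]
        refine ⟨?_, iha (h + 1)⟩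
        intro y hy
        rw [head?_toList] at hy
        cases hy
        unfold BEStep; omega
      · intro x hx y hy
        rw [List.getLast?_cons, getLast?_toList] at hx
        simp only [Option.mem_def, Option.some.injEq, Option.getD_some] at hx
        rw [head?_toList] at hy
        cases hy
        subst hx
        unfold BEStep; omega

theorem takeWhile_dropWhile_eq_of_append {h : ℕ} {A B : List ℕ}
    (hA : ∀ x ∈ A, x ≠ h) (hB : B.head? = some h) :
    (A ++ B).takeWhile (fun x => x ≠ h) = A ∧
    (A ++ B).dropWhile (fun x => x ≠ h) = B := by
  induction A with
  | nil =>
      cases B with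
      | nil => simp at hB
      | cons y t =>
          simp only [List.head?_cons, Option.some.injEq] at hB
          subst hB
          constructor
          · simp [List.takeWhile]
          · simp [List.dropWhile]
  | cons a A ih =>
      have ha : a ≠ h := hA a (by simp)
      have := ih (fun x hx => hA x (by simp [hx]))
      constructor
      · simpa [List.takeWhile_cons, ha] using this.1
      · simpa [List.dropWhile_cons, ha] using this.2

theorem toList_injective {k} : ∀ {e e' : BE k} {h : ℕ},
    e.toList h = e'.toList h → e = e' := by
  intro e
  induction e with
  | nil =>
      intro e' h he
      cases e' with
      | nil => rfl
      | node a b =>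
          exfalso
          have := congrArg List.length he
          rw [length_toList, length_toList] at this
          simp [size] at this
  | node a b iha ihb =>
      intro e' h he
      cases e' with
      | nil =>
          exfalso
          have := congrArg List.length he
          rw [length_toList, length_toList] at this
          simp [size] at this
      | node a' b' =>
          simp only [toList, List.cons.injEq, true_and] at he
          have k1 := takeWhile_dropWhile_eq_of_append (h := h)
            (A := a.toList (h+1)) (B := b.toList h)
            (fun z hz => by have := mem_toList_bounds a (h+1) z hz; omega)
            (head?_toList h b)
          have k2 := takeWhile_dropWhile_eq_of_append (h := h)
            (A := a'.toList (h+1)) (B := b'.toList h)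
            (fun z hz => by have := mem_toList_bounds a' (h+1) z hz; omega)
            (head?_toList h b')
          have h1 : a.toList (h+1) = a'.toList (h+1) := by
            rw [← k1.1, ← k2.1, he]
          have h2 : b.toList h = b'.toList h := by
            rw [← k1.2, ← k2.2, he]
          rw [iha h1, ihb h2]

theorem head?_dropWhile_false (p : ℕ → Bool) (l : List ℕ) :
    ∀ x, (l.dropWhile p).head? = some x → p x = false := by
  induction l with
  | nil => simp
  | cons a t ih =>
      intro x hx
      by_cases hpa : p a = true
      · rw [List.dropWhile_cons_of_pos hpa] at hx
        exact ih x hx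
      · rw [List.dropWhile_cons_of_neg hpa] at hx
        simp only [List.head?_cons, Option.some.injEq] at hx
        subst hx
        simpa using hpa

theorem exists_of_walk : ∀ (N : ℕ) (l : List ℕ) (k h : ℕ), l.length ≤ N →
    l.head? = some h → l.getLast? = some h →
    (∀ x ∈ l, h ≤ x ∧ x ≤ h + k) → l.Chain' BEStep →
    ∃ e : BE k, e.toList h = l := by
  intro N
  induction N with
  | zero =>
      intro l k h hlen hhead _ _ _
      cases l with
      | nil => simp at hhead
      | cons a t => simp at hlen
  | succ N ih =>
      intro l k h hlen hhead hlast hmem hchain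
      cases l with
      | nil => simp at hhead
      | cons y t =>
        simp only [List.head?_cons, Option.some.injEq] at hhead
        subst y
        cases t with
        | nil => exact ⟨nil, rfl⟩
        | cons z t' =>
          set t : List ℕ := z :: t' with ht
          have htne : t ≠ [] := by simp [ht]
          -- the first step goes up
          have hstep : BEStep h z := (List.isChain_cons_cons.mp hchain).1
          have hzmem := hmem z (by simp [ht])
          have hz : z = h + 1 := by unfold BEStep at hstep; omega
          have hk : 1 ≤ k := by omega
          obtain ⟨k', rfl⟩ : ∃ k', k = k' + 1 := ⟨k - 1, by omega⟩
          -- last of t is h, so h ∈ t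
          have hlast_t : t.getLast? = some h := by
            rw [ht]
            rw [ht, List.getLast?_cons_cons] at hlast
            exact hlast
          have hht : h ∈ t := by
            obtain ⟨hne, hx⟩ := List.mem_getLast?_eq_getLast (l := t) (x := h)
              (by rw [hlast_t]; rfl)
            rw [hx]; exact List.getLast_mem hne
          set A : List ℕ := t.takeWhile (fun x => x ≠ h) with hA
          set B : List ℕ := t.dropWhile (fun x => x ≠ h) with hB
          have hAB : A ++ B = t := List.takeWhile_append_dropWhile ..
          have hBne : B ≠ [] := by
            intro hc
            rw [hB, List.dropWhile_eq_nil_iff] at hc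
            have := hc h hht
            simp at this
          have hAmem : ∀ x ∈ A, h + 1 ≤ x ∧ x ≤ h + 1 + k' := by
            intro x hx
            have h1 : x ≠ h := by
              have := List.mem_takeWhile_imp (p := fun x => x ≠ h) (hA ▸ hx)
              simpa using this
            have hxt : x ∈ t := by
              rw [← hAB]; exact List.mem_append_left _ hx
            have h2 := hmem x (List.mem_cons_of_mem _ hxt)
            omega
          have hBhead : B.head? = some h := by
            have h1 : B.head? = some (B.head hBne) := List.head?_eq_head hBne
            have h1' : (List.dropWhile (fun x => decide (x ≠ h)) t).head? = some (B.head hBne) := by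
              rw [← hB]; exact h1
            have h2 := head?_dropWhile_false (fun x => decide (x ≠ h)) t _ h1'
            simp only [decide_eq_false_iff_not, ne_eq, not_not] at h2
            rw [h1, h2]
          have hAne : A ≠ [] := by
            intro hc
            rw [hc] at hAB
            simp only [List.nil_append] at hAB
            rw [hAB] at hBhead
            simp [ht] at hBhead
            omega
          have hABlen : A.length + B.length = t.length := by
            rw [← hAB]; simp
          have htlen : t.length ≤ N := by
            simp only [List.length_cons] at hlen; omega
          -- chain facts
          have hchain_t : t.Chain' BEStep := (List.isChain_cons_cons.mp hchain).2
          change List.IsChain _ _ at hchain_t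
          rw [← hAB, List.isChain_append] at hchain_t
          obtain ⟨hchA, hchB, hrel⟩ := hchain_t
          -- head of A
          have hAhead : A.head? = some (h + 1) := by
            have : t.head? = some (h + 1) := by simp [ht, hz]
            rw [← hAB] at this
            rwa [List.head?_append_of_ne_nil _ hAne] at this
          -- last of A
          have hAlast : A.getLast? = some (h + 1) := by
            have hg : A.getLast? = some (A.getLast hAne) := List.getLast?_eq_getLast (l := A) hAne
            have hs : BEStep (A.getLast hAne) h :=
              hrel _ (Option.mem_def.mpr hg) h (Option.mem_def.mpr hBhead)
            have hxb := hAmem _ (List.getLast_mem hAne)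
            have hfin : A.getLast hAne = h + 1 := by unfold BEStep at hs; omega
            rw [hg, hfin]
          -- last of B
          have hBlast : B.getLast? = some h := by
            rw [← hAB, List.getLast?_append] at hlast_t
            have hg : B.getLast? = some (B.getLast hBne) := List.getLast?_eq_getLast (l := B) hBne
            rw [hg] at hlast_t
            simp only [Option.some_or] at hlast_t
            rw [hg, hlast_t]
          have hBmem : ∀ x ∈ B, h ≤ x ∧ x ≤ h + (k' + 1) := by
            intro x hx
            have hxt : x ∈ t := by
              rw [← hAB]; exact List.mem_append_right _ hx
            exact hmem x (List.mem_cons_of_mem _ hxt)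
          obtain ⟨a, ha⟩ := ih A k' (h + 1) (by omega) hAhead hAlast hAmem hchA
          obtain ⟨b, hb⟩ := ih B (k' + 1) h
            (by have : 1 ≤ A.length := List.length_pos_iff.mpr hAne; omega)
            hBhead hBlast hBmem hchB
          refine ⟨node a b, ?_⟩
          simp only [toList, ha, hb, hAB]

theorem eq_nil_of_size_eq_zero {k} {e : BE k} (h : e.size = 0) : e = nil := by
  cases e with
  | nil => rfl
  | node a b => simp [size] at h

theorem size_ne_one {k} (e : BE k) : e.size ≠ 1 := by
  cases e <;> simp [size]

end BE

/-- Walks as lists. -/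
def listWalk (k n : ℕ) : Type :=
  {l : List ℕ // l.length = n + 1 ∧ l.head? = some 0 ∧ l.getLast? = some 0 ∧
    (∀ x ∈ l, x ≤ k) ∧ l.Chain' BEStep}

/-- Equivalence between `BE` excursions of size `n` and list walks. -/
noncomputable def beEquivListWalk (k n : ℕ) :
    {e : BE k // e.size = n} ≃ listWalk k n := by
  refine Equiv.ofBijective (fun e => ⟨e.1.toList 0, ?_, ?_, ?_, ?_, ?_⟩) ⟨?_, ?_⟩
  · rw [BE.length_toList _ 0, e.2]
  · exact BE.head?_toList 0 e.1
  · exact BE.getLast?_toList e.1 0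
  · intro x hx; have := BE.mem_toList_bounds e.1 0 x hx; omega
  · exact BE.chain'_toList e.1 0
  · intro e e' h
    have h' : BE.toList 0 e.1 = BE.toList 0 e'.1 := congrArg Subtype.val h
    exact Subtype.ext (BE.toList_injective h')
  · rintro ⟨l, hlen, hhead, hlast, hmem, hchain⟩
    obtain ⟨e, he⟩ := BE.exists_of_walk l.length l k 0 le_rfl hhead hlast
      (fun x hx => ⟨Nat.zero_le x, by simpa using hmem x hx⟩) hchain
    refine ⟨⟨e, ?_⟩, ?_⟩
    · have := BE.length_toList e 0; rw [he, hlen] at this; omega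
    · exact Subtype.ext he

/-- The subtype in the definition of `boundedExcursionCount`. -/
def finWalk (k n : ℕ) : Type :=
  {w : Fin (n + 1) → ℕ //
    w 0 = 0 ∧ w (Fin.last n) = 0 ∧ (∀ j : Fin (n + 1), w j ≤ k) ∧
    ∀ j : Fin n, ((w j.succ : ℤ) - (w j.castSucc : ℤ)).natAbs = 1}

noncomputable def finWalkEquivListWalk (k n : ℕ) : finWalk k n ≃ listWalk k n := by
  refine Equiv.ofBijective (fun w => ⟨List.ofFn w.1, ?_, ?_, ?_, ?_, ?_⟩) ⟨?_, ?_⟩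
  · simp
  · rw [List.ofFn_succ]; simp [w.2.1]
  · have hne : List.ofFn w.1 ≠ [] := by simp
    rw [List.getLast?_eq_getLast hne, List.getLast_eq_getElem]
    simp only [List.length_ofFn, List.getElem_ofFn]
    have := w.2.2.1
    convert congrArg some this using 3
    exact Fin.ext (by simp)
  · intro x hx
    rw [List.mem_ofFn] at hx
    obtain ⟨i, rfl⟩ := hx
    exact w.2.2.2.1 i
  · change List.IsChain _ _
    rw [List.isChain_ofFn]
    intro i hi
    have := w.2.2.2.2 ⟨i, by simpa using hi⟩
    exact this
  · intro w w' h
    have h' := congrArg Subtype.val h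
    exact Subtype.ext (List.ofFn_injective h')
  · rintro ⟨l, hlen, hhead, hlast, hmem, hchain⟩
    have hne : l ≠ [] := by intro hc; rw [hc] at hlen; simp at hlen
    refine ⟨⟨fun i => l.get (Fin.cast hlen.symm i), ?_, ?_, ?_, ?_⟩, ?_⟩
    · have h0 : l.head hne = 0 := by
        have h1 := List.head?_eq_head hne
        rw [hhead] at h1
        exact (Option.some.inj h1).symm
      show l.get (Fin.cast hlen.symm 0) = 0
      rw [List.get_eq_getElem]
      simpa [List.head_eq_getElem_zero hne] using h0
    · have hlg : l.getLast hne = 0 := by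
        have h1 := List.getLast?_eq_getLast (l := l) hne
        rw [h1] at hlast
        exact Option.some.inj hlast
      show l.get (Fin.cast hlen.symm (Fin.last n)) = 0
      rw [List.get_eq_getElem, ← hlg, List.getLast_eq_getElem]
      congr 1
      simp [hlen, Fin.last]
    · intro j
      exact hmem _ (List.get_mem l _)
    · intro j
      have := List.isChain_iff_getElem.mp hchain j.val (by rw [hlen]; omega)
      exact this
    · apply Subtype.ext
      show List.ofFn (fun i => l.get (Fin.cast hlen.symm i)) = l
      apply List.ext_get (by simp [hlen])
      intro i h1 h2
      rw [List.get_ofFn]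
      congr 1

instance finWalk_finite (k n : ℕ) : Finite (finWalk k n) := by
  have hb : ∀ w : finWalk k n, ∀ i, w.1 i < k + 1 := fun w i => Nat.lt_succ_of_le (w.2.2.2.1 i)
  refine Finite.of_injective
    (fun w => (fun i => (⟨w.1 i, hb w i⟩ : Fin (k + 1)) : Fin (n + 1) → Fin (k + 1))) ?_
  intro w w' h
  apply Subtype.ext
  funext i
  exact congrArg Fin.val (congrFun h i)

instance beSub_finite (k n : ℕ) : Finite {e : BE k // e.size = n} :=
  Finite.of_equiv _ (((beEquivListWalk k n).trans (finWalkEquivListWalk k n).symm)).symm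

theorem count_eq_card_be (k n : ℕ) :
    boundedExcursionCount k n = Nat.card {e : BE k // e.size = n} :=
  Nat.card_congr ((finWalkEquivListWalk k n).trans (beEquivListWalk k n).symm)

def sizeZeroEquiv (k : ℕ) : {e : BE k // e.size = 0} ≃ Unit where
  toFun _ := Unit.unit
  invFun _ := ⟨BE.nil, rfl⟩
  left_inv := by
    rintro ⟨e, he⟩
    exact (Subtype.ext (BE.eq_nil_of_size_eq_zero he)).symm
  right_inv _ := rfl

theorem count_zero_n (k : ℕ) : boundedExcursionCount k 0 = 1 := by
  rw [count_eq_card_be, Nat.card_congr (sizeZeroEquiv k)]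
  simp

theorem count_one (k : ℕ) : boundedExcursionCount k 1 = 0 := by
  rw [count_eq_card_be]
  haveI : IsEmpty {e : BE k // e.size = 1} := ⟨fun x => BE.size_ne_one x.1 x.2⟩
  simp

theorem count_k0 (n : ℕ) : boundedExcursionCount 0 n = if n = 0 then 1 else 0 := by
  rcases eq_or_ne n 0 with rfl | hn
  · simp [count_zero_n]
  · rw [count_eq_card_be, if_neg hn]
    haveI : IsEmpty {e : BE 0 // e.size = n} := by
      constructor
      rintro ⟨e, he⟩
      cases e
      simp [BE.size] at he
      exact hn he.symm
    simp

noncomputable def decompEquiv (k n : ℕ) :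
    {e : BE (k + 1) // e.size = n + 2} ≃
      (Σ p : (Finset.HasAntidiagonal.antidiagonal n : Finset (ℕ × ℕ)),
        {a : BE k // a.size = (p : ℕ × ℕ).1} × {b : BE (k + 1) // b.size = (p : ℕ × ℕ).2}) := by
  apply (Equiv.ofBijective (fun x =>
    (⟨BE.node x.2.1.1 x.2.2.1, by
      have h1 := x.2.1.2
      have h2 := x.2.2.2
      have hp := Finset.HasAntidiagonal.mem_antidiagonal.mp x.1.2
      simp only [BE.size, h1, h2]
      omega⟩ : {e : BE (k + 1) // e.size = n + 2})) ⟨?_, ?_⟩).symm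
  · rintro ⟨⟨⟨x1, x2⟩, hp⟩, ⟨a, ha⟩, ⟨b, hb⟩⟩ ⟨⟨⟨y1, y2⟩, hq⟩, ⟨a', ha'⟩, ⟨b', hb'⟩⟩ h
    have h' : BE.node a b = BE.node a' b' := congrArg Subtype.val h
    cases h'
    dsimp at ha ha' hb hb'
    subst ha
    subst hb
    subst ha'
    subst hb'
    rfl
  · rintro ⟨e, he⟩
    cases e with
    | nil => simp [BE.size] at he
    | node a b =>
        have hs : a.size + b.size = n := by
          simp only [BE.size] at he
          omega
        exact ⟨⟨⟨(a.size, b.size), Finset.HasAntidiagonal.mem_antidiagonal.mpr hs⟩, ⟨a, rfl⟩, ⟨b, rfl⟩⟩,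
          Subtype.ext rfl⟩

theorem count_rec (k n : ℕ) :
    boundedExcursionCount (k + 1) (n + 2) =
      ∑ p ∈ Finset.HasAntidiagonal.antidiagonal n,
        boundedExcursionCount k p.1 * boundedExcursionCount (k + 1) p.2 := by
  classical
  rw [count_eq_card_be, Nat.card_congr (decompEquiv k n)]
  haveI : ∀ p : (Finset.HasAntidiagonal.antidiagonal n : Finset (ℕ × ℕ)),
      Fintype ({a : BE k // a.size = (p : ℕ × ℕ).1} × {b : BE (k + 1) // b.size = (p : ℕ × ℕ).2}) :=
    fun p => Fintype.ofFinite _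
  rw [Nat.card_eq_fintype_card, Fintype.card_sigma]
  rw [← Finset.sum_coe_sort (Finset.HasAntidiagonal.antidiagonal n)
    (fun p => boundedExcursionCount k p.1 * boundedExcursionCount (k + 1) p.2)]
  congr 1
  funext p
  rw [← Nat.card_eq_fintype_card, Nat.card_prod, count_eq_card_be, count_eq_card_be]

theorem coeff_series (k n : ℕ) :
    (PowerSeries.coeff n) (boundedExcursionSeries k) = (boundedExcursionCount k n : ℚ) := by
  simp [boundedExcursionSeries]

theorem boundedExcursionSeries_continued_fraction :
    boundedExcursionSeries 0 = 1 ∧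
    ∀ k : ℕ, 1 ≤ k →
      boundedExcursionSeries k *
        (1 - PowerSeries.X ^ 2 * boundedExcursionSeries (k - 1)) = 1 := by
  constructor
  · apply PowerSeries.ext
    intro n
    rw [coeff_series, count_k0, PowerSeries.coeff_one]
    split <;> simp
  · intro k hk
    obtain ⟨k', rfl⟩ : ∃ k', k = k' + 1 := ⟨k - 1, by omega⟩
    simp only [Nat.add_sub_cancel]
    have hcomm : boundedExcursionSeries (k' + 1) *
        (1 - PowerSeries.X ^ 2 * boundedExcursionSeries k') =
        boundedExcursionSeries (k' + 1) -
          (boundedExcursionSeries k' * boundedExcursionSeries (k' + 1)) * PowerSeries.X ^ 2 := by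
      ring
    rw [hcomm]
    apply PowerSeries.ext
    intro n
    rw [map_sub, PowerSeries.coeff_mul_X_pow', coeff_series, PowerSeries.coeff_one]
    rcases n with _ | _ | m
    · rw [if_neg (by omega), if_pos rfl, count_zero_n]
      norm_num
    · rw [if_neg (by omega), if_neg (by omega), count_one]
      norm_num
    · rw [if_pos (by omega), if_neg (by omega)]
      have hconv : (PowerSeries.coeff (m + 2 - 2))
          (boundedExcursionSeries k' * boundedExcursionSeries (k' + 1)) =
          ((∑ p ∈ Finset.HasAntidiagonal.antidiagonal m,
            boundedExcursionCount k' p.1 * boundedExcursionCount (k' + 1) p.2 : ℕ) : ℚ) := by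
        rw [show m + 2 - 2 = m from rfl, PowerSeries.coeff_mul]
        push_cast
        refine Finset.sum_congr rfl ?_
        intro p _
        rw [coeff_series, coeff_series]
      rw [hconv, ← count_rec]
      norm_num
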